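/- Let G be a graph on a linearly ordered set S, let D be an acyclic orientation of G|_ρ for ρ ⊆ S, and let x ∈ S \ ρ. Then there is a unique acyclic orientation D' of G|_{ρ ∪ {x}} extending D such that δ_{D'} restricted to ρ equals δ_D and δ_{D'}(x) = x; namely, D' directs each edge {x,b} of G from b to x if δ_D(b) < x, and from x to b otherwise. -/

import Mathlib

/-- `delta ρ D i` is the minimum vertex of `ρ` reachable from `i` by a
directed path in `D` (where `i` is reachable from itself). -/
noncomputable def delta {S : Type*} [LinearOrder S]
    (ρ : Finset S) (D : S → S → Prop) (i : S) : S := by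
  classical
  exact if h : (ρ.filter fun j => Relation.ReflTransGen D i j).Nonempty
    then (ρ.filter fun j => Relation.ReflTransGen D i j).min' h
    else i

/-- `D` is an acyclic orientation of the induced subgraph `G|_ρ`. -/
def IsAcycOrient {S : Type*} (G : SimpleGraph S) (ρ : Finset S)
    (D : S → S → Prop) : Prop :=
  (∀ a b, D a b → a ∈ ρ ∧ b ∈ ρ ∧ G.Adj a b) ∧
  (∀ a b, a ∈ ρ → b ∈ ρ → G.Adj a b → (D a b ↔ ¬ D b a)) ∧
  (∀ a, ¬ Relation.TransGen D a a)

/-- The extension of `D` to `ρ ∪ {x}` directing each edge `{x,b}` of `G`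
from `b` to `x` if `δ_D(b) < x`, and from `x` to `b` otherwise. -/
noncomputable def extendOrient {S : Type*} [LinearOrder S] (G : SimpleGraph S)
    (ρ : Finset S) (D : S → S → Prop) (x : S) : S → S → Prop :=
  fun a b => D a b ∨
    (b = x ∧ a ∈ ρ ∧ G.Adj a x ∧ delta ρ D a < x) ∨
    (a = x ∧ b ∈ ρ ∧ G.Adj x b ∧ ¬ delta ρ D b < x)

section Aux
variable {S : Type*} [LinearOrder S]

lemma delta_le {ρ : Finset S} {D : S → S → Prop} {i j : S} (hj : j ∈ ρ)
    (hij : Relation.ReflTransGen D i j) : delta ρ D i ≤ j := by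
  classical
  unfold delta
  have hne : (ρ.filter fun k => Relation.ReflTransGen D i k).Nonempty :=
    ⟨j, Finset.mem_filter.2 ⟨hj, hij⟩⟩
  rw [dif_pos hne]
  exact Finset.min'_le _ _ (Finset.mem_filter.2 ⟨hj, hij⟩)

lemma delta_spec {ρ : Finset S} {D : S → S → Prop} {i : S} (hi : i ∈ ρ) :
    delta ρ D i ∈ ρ ∧ Relation.ReflTransGen D i (delta ρ D i) := by
  classical
  unfold delta
  have hne : (ρ.filter fun k => Relation.ReflTransGen D i k).Nonempty :=
    ⟨i, Finset.mem_filter.2 ⟨hi, Relation.ReflTransGen.refl⟩⟩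
  rw [dif_pos hne]
  have := Finset.min'_mem _ hne
  rw [Finset.mem_filter] at this
  exact this

lemma delta_mono {ρ : Finset S} {D : S → S → Prop} {i j : S} (hj : j ∈ ρ)
    (hij : Relation.ReflTransGen D i j) : delta ρ D i ≤ delta ρ D j :=
  delta_le (delta_spec hj).1 (hij.trans (delta_spec hj).2)

variable {G : SimpleGraph S} {ρ : Finset S} {D : S → S → Prop} {x : S}

lemma delta_ne_x (hx : x ∉ ρ) {b : S} (hb : b ∈ ρ) : delta ρ D b ≠ x :=
  fun e => hx (e ▸ (delta_spec hb).1)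

/-- Edges out of `x` in the extension go to vertices with `x < δ`. -/
lemma edge_from_x (hD : IsAcycOrient G ρ D) (hx : x ∉ ρ) {k : S}
    (h : extendOrient G ρ D x x k) : k ∈ ρ ∧ x < delta ρ D k := by
  rcases h with h | ⟨_, hxρ, _⟩ | ⟨_, hk, _, hlt⟩
  · exact absurd (hD.1 _ _ h).1 hx
  · exact absurd hxρ hx
  · exact ⟨hk, (not_lt.1 hlt).lt_of_ne' (delta_ne_x hx hk)⟩

lemma reach_from_x (hD : IsAcycOrient G ρ D) (hx : x ∉ ρ) {j : S}
    (h : Relation.ReflTransGen (extendOrient G ρ D x) x j) :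
    j = x ∨ (j ∈ ρ ∧ x < delta ρ D j) := by
  induction h with
  | refl => exact Or.inl rfl
  | @tail j k hxj hjk ih =>
    rcases ih with rfl | ⟨hj, hxδ⟩
    · exact Or.inr (edge_from_x hD hx hjk)
    · rcases hjk with h | ⟨_, _, _, hlt⟩ | ⟨rfl, _⟩
      · exact Or.inr ⟨(hD.1 _ _ h).2.1,
          hxδ.trans_le (delta_mono (hD.1 _ _ h).2.1 (Relation.ReflTransGen.single h))⟩
      · exact absurd hlt (not_lt.2 hxδ.le)
      · exact absurd hj hx

lemma reach_from_rho (hD : IsAcycOrient G ρ D) (hx : x ∉ ρ) {a b : S}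
    (ha : a ∈ ρ) (h : Relation.ReflTransGen (extendOrient G ρ D x) a b) :
    Relation.ReflTransGen D a b ∨
      (delta ρ D a < x ∧ (b = x ∨ (b ∈ ρ ∧ x < delta ρ D b))) := by
  induction h with
  | refl => exact Or.inl Relation.ReflTransGen.refl
  | @tail j k hab hjk ih =>
    rcases ih with haj | ⟨hda, rfl | ⟨hj, hxδ⟩⟩
    · have hj : j ∈ ρ := by
        rcases haj.cases_tail with e | ⟨c, _, hcj⟩
        · exact e ▸ ha
        · exact (hD.1 _ _ hcj).2.1
      rcases hjk with h | ⟨hk, _, _, hlt⟩ | ⟨rfl, _⟩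
      · exact Or.inl (haj.tail h)
      · exact Or.inr ⟨(delta_mono hj haj).trans_lt hlt, Or.inl hk⟩
      · exact absurd hj hx
    · exact Or.inr ⟨hda, Or.inr (edge_from_x hD hx hjk)⟩
    · rcases hjk with h | ⟨_, _, _, hlt⟩ | ⟨rfl, _⟩
      · exact Or.inr ⟨hda, Or.inr ⟨(hD.1 _ _ h).2.1,
          hxδ.trans_le (delta_mono (hD.1 _ _ h).2.1 (Relation.ReflTransGen.single h))⟩⟩
      · exact absurd hlt (not_lt.2 hxδ.le)
      · exact absurd hj hx

set_option linter.unusedSectionVars false in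
/-- No directed path in `D` from a vertex of `ρ` can reach `x ∉ ρ`. -/
lemma not_reach_x (hD : IsAcycOrient G ρ D) (hx : x ∉ ρ) {a : S} (ha : a ∈ ρ)
    (h : Relation.ReflTransGen D a x) : False := by
  rcases h.cases_tail with e | ⟨c, _, hcx⟩
  · exact hx (e ▸ ha)
  · exact hx (hD.1 _ _ hcx).2.1

end Aux

/-- There is a unique acyclic orientation `D'` of `G|_{ρ ∪ {x}}` extending the
acyclic orientation `D` of `G|_ρ` such that `δ_{D'}` restricted to `ρ` equals
`δ_D` and `δ_{D'}(x) = x`; namely `extendOrient G ρ D x`. -/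
theorem extendOrient_unique {S : Type*} [LinearOrder S] [DecidableEq S]
    (G : SimpleGraph S) (ρ : Finset S) (D : S → S → Prop)
    (hD : IsAcycOrient G ρ D) (x : S) (hx : x ∉ ρ) :
    (IsAcycOrient G (insert x ρ) (extendOrient G ρ D x) ∧
      (∀ i ∈ ρ, delta (insert x ρ) (extendOrient G ρ D x) i = delta ρ D i) ∧
      delta (insert x ρ) (extendOrient G ρ D x) x = x) ∧
    (∀ D'' : S → S → Prop, IsAcycOrient G (insert x ρ) D'' →
      (∀ a b, a ∈ ρ → b ∈ ρ → (D'' a b ↔ D a b)) →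
      (∀ i ∈ ρ, delta (insert x ρ) D'' i = delta ρ D i) →
      delta (insert x ρ) D'' x = x →
      D'' = extendOrient G ρ D x) := by
  set D' := extendOrient G ρ D x with hD'def
  have hmemx : x ∈ insert x ρ := Finset.mem_insert_self x ρ
  -- restriction of D' to ρ is D
  have hrestr : ∀ a b, a ∈ ρ → b ∈ ρ → (D' a b ↔ D a b) := by
    intro a b ha hb
    constructor
    · rintro (h | ⟨rfl, _⟩ | ⟨rfl, _⟩)
      · exact h
      · exact absurd hb hx
      · exact absurd ha hx
    · exact Or.inl
  -- characterization of edges to/from x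
  have hxb_iff : ∀ b ∈ ρ, G.Adj x b → (D' x b ↔ ¬ delta ρ D b < x) := by
    intro b hb hadj
    constructor
    · rintro (h | ⟨rfl, _⟩ | ⟨_, _, _, h⟩)
      · exact absurd (hD.1 _ _ h).1 hx
      · exact absurd hb hx
      · exact h
    · intro h; exact Or.inr (Or.inr ⟨rfl, hb, hadj, h⟩)
  have hbx_iff : ∀ b ∈ ρ, G.Adj b x → (D' b x ↔ delta ρ D b < x) := by
    intro b hb hadj
    constructor
    · rintro (h | ⟨_, _, _, h⟩ | ⟨rfl, _⟩)
      · exact absurd (hD.1 _ _ h).2.1 hx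
      · exact h
      · exact absurd hb hx
    · intro h; exact Or.inr (Or.inl ⟨rfl, hb, hadj, h⟩)
  -- D' is an acyclic orientation
  have hD'acyc : IsAcycOrient G (insert x ρ) D' := by
    refine ⟨?_, ?_, ?_⟩
    · rintro a b (h | ⟨rfl, ha, hadj, _⟩ | ⟨rfl, hb, hadj, _⟩)
      · exact ⟨Finset.mem_insert_of_mem (hD.1 _ _ h).1,
          Finset.mem_insert_of_mem (hD.1 _ _ h).2.1, (hD.1 _ _ h).2.2⟩
      · exact ⟨Finset.mem_insert_of_mem ha, hmemx, hadj⟩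
      · exact ⟨hmemx, Finset.mem_insert_of_mem hb, hadj⟩
    · intro a b ha hb hadj
      rcases Finset.mem_insert.1 ha with rfl | ha' <;>
        rcases Finset.mem_insert.1 hb with rfl | hb'
      · exact absurd hadj G.irrefl
      · rw [hxb_iff b hb' hadj, hbx_iff b hb' hadj.symm]
      · rw [hbx_iff a ha' hadj, hxb_iff a ha' hadj.symm, not_not]
      · rw [hrestr a b ha' hb', hrestr b a hb' ha']
        exact hD.2.1 a b ha' hb' hadj
    · intro a hcyc
      obtain ⟨b, hab, hba⟩ := Relation.TransGen.head'_iff.1 hcyc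
      rcases hab with h | ⟨rfl, ha, _, hlt⟩ | ⟨rfl, hb, hadj, hnlt⟩
      · have haρ : a ∈ ρ := (hD.1 _ _ h).1
        have hbρ : b ∈ ρ := (hD.1 _ _ h).2.1
        rcases reach_from_rho hD hx hbρ hba with hr | ⟨hδb, rfl | ⟨_, hxδa⟩⟩
        · exact hD.2.2 a (Relation.TransGen.head' h hr)
        · exact hx haρ
        · exact absurd (hxδa.trans_le
            ((delta_mono hbρ (Relation.ReflTransGen.single h)).trans hδb.le))
            (lt_irrefl x)
      · rcases reach_from_x hD hx hba with rfl | ⟨_, hxδa⟩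
        · exact hx ha
        · exact absurd hlt (not_lt.2 hxδa.le)
      · obtain ⟨hb2, hxδb⟩ :=
          edge_from_x hD hx (Or.inr (Or.inr ⟨rfl, hb, hadj, hnlt⟩))
        rcases reach_from_rho hD hx hb hba with hr | ⟨hδb, _⟩
        · exact not_reach_x hD hx hb hr
        · exact absurd hδb (not_lt.2 hxδb.le)
  -- delta is preserved on ρ
  have hδρ : ∀ i ∈ ρ, delta (insert x ρ) D' i = delta ρ D i := by
    intro i hi
    refine le_antisymm ?_ ?_
    · exact delta_le (Finset.mem_insert_of_mem (delta_spec hi).1)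
        (Relation.ReflTransGen.mono (r := D) (p := D') (fun a b h => Or.inl h) _ _ (delta_spec hi).2)
    · obtain ⟨hjmem, hjreach⟩ := delta_spec (ρ := insert x ρ) (D := D')
        (Finset.mem_insert_of_mem hi)
      rcases reach_from_rho hD hx hi hjreach with hr | ⟨hδi, he | ⟨hjρ, hxδj⟩⟩
      · have hjρ : delta (insert x ρ) D' i ∈ ρ := by
          rcases Finset.mem_insert.1 hjmem with he | h
          · exact absurd (he ▸ hr) (fun h => not_reach_x hD hx hi h)
          · exact h
        exact delta_le hjρ hr
      · rw [he]; exact hδi.le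
      · exact hδi.le.trans ((hxδj.trans_le
          (delta_le hjρ Relation.ReflTransGen.refl)).le)
  -- delta at x is x
  have hδx : delta (insert x ρ) D' x = x := by
    have h1 : delta (insert x ρ) D' x ≤ x :=
      delta_le hmemx Relation.ReflTransGen.refl
    obtain ⟨_, h2⟩ := delta_spec (ρ := insert x ρ) (D := D') hmemx
    rcases reach_from_x hD hx h2 with e | ⟨hjρ, hxδ⟩
    · exact e
    · exact absurd (hxδ.trans_le (delta_le hjρ Relation.ReflTransGen.refl))
        (not_lt.2 h1)
  refine ⟨⟨hD'acyc, hδρ, hδx⟩, ?_⟩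
  -- uniqueness
  intro D'' hD'' hag hδ''ρ hδ''x
  funext a b
  apply propext
  constructor
  · intro h
    obtain ⟨haI, hbI, hadj⟩ := hD''.1 a b h
    rcases Finset.mem_insert.1 haI with rfl | ha <;>
      rcases Finset.mem_insert.1 hbI with rfl | hb
    · exact absurd hadj G.irrefl
    · -- a = x, b ∈ ρ : need ¬ δ b < x
      have hle := delta_mono (ρ := insert a ρ) (D := D'')
        (Finset.mem_insert_of_mem hb) (Relation.ReflTransGen.single h)
      rw [hδ''x, hδ''ρ b hb] at hle
      exact Or.inr (Or.inr ⟨rfl, hb, hadj, not_lt.2 hle⟩)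
    · -- a ∈ ρ, b = x : need δ a < x
      have hle := delta_le hmemx (Relation.ReflTransGen.single h)
      rw [hδ''ρ a ha] at hle
      exact Or.inr (Or.inl ⟨rfl, ha, hadj, hle.lt_of_ne (delta_ne_x hx ha)⟩)
    · exact Or.inl ((hag a b ha hb).1 h)
  · rintro (h | ⟨rfl, ha, hadj, hlt⟩ | ⟨rfl, hb, hadj, hnlt⟩)
    · exact (hag a b (hD.1 _ _ h).1 (hD.1 _ _ h).2.1).2 h
    · -- b = x, δ a < x : must have D'' a x
      by_contra hn
      have hxa : D'' b a :=
        (hD''.2.1 b a hmemx (Finset.mem_insert_of_mem ha) hadj.symm).2 hn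
      have hle := delta_mono (ρ := insert b ρ) (D := D'')
        (Finset.mem_insert_of_mem ha) (Relation.ReflTransGen.single hxa)
      rw [hδ''x, hδ''ρ a ha] at hle
      exact absurd hlt (not_lt.2 hle)
    · -- a = x, ¬ δ b < x : must have D'' x b
      by_contra hn
      have hbx : D'' b a :=
        (hD''.2.1 b a (Finset.mem_insert_of_mem hb) hmemx hadj.symm).2 hn
      have hle := delta_le hmemx (Relation.ReflTransGen.single hbx)
      rw [hδ''ρ b hb] at hle
      exact hnlt (hle.lt_of_ne (delta_ne_x hx hb))
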